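/- Let q be a prime power, a ∈ F_q^*, n ≥ 2, and suppose that for every nontrivial additive character ψ of F_q, |∑_{y ∈ V} ψ(y)| ≤ (n+1)√q where V = {D_n(x,a) : x ∈ F_q}. Let k ≥ 1 with |V| ≥ k+1, and suppose (1/q)·|V|(|V|-1)···(|V|-k) > ((n+1)√q/2 + k + |V|/2)(( n+1)√q/2 + k + |V|/2 - 1)···((n+1)√q/2 + k + |V|/2 - k). Then for every b ∈ F_q there exist pairwise distinct y_1,...,y_{k+1} ∈ V with y_1 + ... + y_{k+1} = b. -/

import Mathlib

open Finset

/-- Hockey-stick identity for generalized rising binomial coefficients. -/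
private lemma hockey (B : ℝ) : ∀ t : ℕ,
    ∑ j ∈ range (t + 1), (∏ i ∈ range j, (B + i)) / (j.factorial : ℝ)
      = (∏ i ∈ range t, (B + 1 + i)) / (t.factorial : ℝ)
  | 0 => by simp
  | (t + 1) => by
    rw [sum_range_succ, hockey B t]
    have h1 : ∏ i ∈ range (t + 1), (B + (i : ℝ))
        = B * ∏ i ∈ range t, (B + 1 + i) := by
      rw [prod_range_succ']
      have h1' : ∀ i ∈ range t, B + ((i + 1 : ℕ) : ℝ) = B + 1 + (i : ℝ) :=
        fun i _ => by push_cast; ring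
      rw [prod_congr rfl h1']
      push_cast; ring
    have h2 : ((t + 1).factorial : ℝ) = ((t : ℝ) + 1) * (t.factorial : ℝ) := by
      rw [Nat.factorial_succ]; push_cast; ring
    have h3 : (t.factorial : ℝ) ≠ 0 := by positivity
    have h4 : ((t : ℝ) + 1) ≠ 0 := by positivity
    rw [h1, h2, prod_range_succ]
    field_simp
    ring

private lemma descProd : ∀ (m v : ℕ), m ≤ v →
    ((v.descFactorial m : ℕ) : ℝ) = ∏ i ∈ range m, ((v : ℝ) - i)
  | 0, v, _ => by simp
  | (m + 1), v, h => by
    rw [Nat.descFactorial_succ, prod_range_succ, Nat.cast_mul,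
      descProd m v (by omega), Nat.cast_sub (by omega : m ≤ v)]
    ring

private lemma step_alg (u v B tp P : ℝ) (hu0 : 0 ≤ u) (huv : u ≤ v)
    (hB : B = (u + v) / 2) (hc : tp ≤ B) (hP : 0 ≤ P) :
    u * B * P + v * tp * P ≤ B * P * (B + tp) := by
  subst hB
  nlinarith [mul_nonneg (mul_nonneg (sub_nonneg.mpr huv) (sub_nonneg.mpr hc)) hP]

/-- The key real-analytic recursion lemma (Li–Wan style bound). -/
private lemma aux_key (u : ℝ) (v : ℕ) (hu0 : 0 ≤ u) (huv : u ≤ (v : ℝ)) (E : ℕ → ℝ)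
    (hE0 : E 0 = 1) (hEnn : ∀ j, 0 ≤ E j)
    (hN : ∀ m : ℕ, 1 ≤ m →
      (m : ℝ) * E m ≤ u * E (m - 1) + (v : ℝ) * ∑ j ∈ range (m - 1), E j)
    (hBin : ∀ j, E j ≤ (v.choose j : ℝ)) :
    ∀ m : ℕ, m ≤ v → E m * (m.factorial : ℝ) ≤ ∏ i ∈ range m, ((u + v) / 2 + i) := by
  intro m
  induction m using Nat.strong_induction_on with
  | _ m IH =>
    intro hmv
    match m, hmv, IH with
    | 0, _, _ => simp [hE0]
    | 1, hmv, _ =>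
      have h := hN 1 le_rfl
      simp [hE0] at h
      rw [prod_range_one]
      have hv1 : (1 : ℝ) ≤ (v : ℝ) := by exact_mod_cast hmv
      simp only [Nat.factorial_one, Nat.cast_one, mul_one]
      push_cast
      linarith
    | (t + 2), hmv, IH =>
      set B : ℝ := (u + (v : ℝ)) / 2 with hB2
      have hBnn : 0 ≤ B := by
        rw [hB2]
        have : (0:ℝ) ≤ (v:ℝ) := by positivity
        linarith
      by_cases hc : ((t : ℝ) + 1) ≤ B
      · -- recursive case
        have hIH1 : E (t + 1) * ((t + 1).factorial : ℝ) ≤ ∏ i ∈ range (t + 1), (B + i) :=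
          IH (t + 1) (by omega) (by omega)
        have hsum : ∑ j ∈ range (t + 1), E j
            ≤ (∏ i ∈ range t, (B + 1 + i)) / (t.factorial : ℝ) := by
          rw [← hockey B t]
          refine sum_le_sum fun j hj => ?_
          have hj' : j < t + 1 := mem_range.mp hj
          have h := IH j (by omega) (by omega)
          rw [le_div_iff₀ (by positivity : (0:ℝ) < (j.factorial : ℝ))]
          exact h
        set P := ∏ i ∈ range t, (B + 1 + i) with hPdef
        have hP0 : 0 ≤ P :=
          prod_nonneg fun i _ => by
            have : (0:ℝ) ≤ (i:ℝ) := by positivity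
            linarith
        have hprod1 : ∏ i ∈ range (t + 1), (B + (i : ℝ)) = B * P := by
          rw [prod_range_succ']
          have h1' : ∀ i ∈ range t, B + ((i + 1 : ℕ) : ℝ) = B + 1 + (i : ℝ) :=
            fun i _ => by push_cast; ring
          rw [prod_congr rfl h1', hPdef]
          push_cast; ring
        have hprod2 : ∏ i ∈ range (t + 2), (B + (i : ℝ)) = B * P * (B + ((t:ℝ) + 1)) := by
          rw [prod_range_succ, hprod1]
          push_cast; ring
        have hNm := hN (t + 2) (by omega)
        rw [show t + 2 - 1 = t + 1 by omega] at hNm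
        have h5 : E (t + 1) ≤ B * P / ((t + 1).factorial : ℝ) := by
          rw [le_div_iff₀ (by positivity : (0:ℝ) < ((t + 1).factorial : ℝ))]
          rw [hprod1] at hIH1
          exact hIH1
        have hfs : ((t + 2).factorial : ℝ) = ((t : ℝ) + 2) * (((t + 1).factorial : ℝ)) := by
          rw [Nat.factorial_succ]; push_cast; ring
        have hfs1 : (((t + 1).factorial : ℝ)) = ((t : ℝ) + 1) * (t.factorial : ℝ) := by
          rw [Nat.factorial_succ]; push_cast; ring
        have hstep : ((t : ℝ) + 2) * E (t + 2)
            ≤ u * (B * P / ((t + 1).factorial : ℝ)) + (v : ℝ) * (P / (t.factorial : ℝ)) := by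
          have hcast : ((t : ℝ) + 2) * E (t + 2) ≤ u * E (t + 1)
              + (v : ℝ) * ∑ j ∈ range (t + 1), E j := by
            have : (((t + 2 : ℕ)) : ℝ) = (t : ℝ) + 2 := by push_cast; ring
            rw [← this]
            exact hNm
          refine le_trans hcast (add_le_add ?_ ?_)
          · exact mul_le_mul_of_nonneg_left h5 hu0
          · exact mul_le_mul_of_nonneg_left hsum (by positivity)
        rw [hprod2]
        calc E (t + 2) * ((t + 2).factorial : ℝ)
            = (((t : ℝ) + 2) * E (t + 2)) * ((t + 1).factorial : ℝ) := by
              rw [hfs]; ring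
          _ ≤ (u * (B * P / ((t + 1).factorial : ℝ)) + (v : ℝ) * (P / (t.factorial : ℝ)))
              * ((t + 1).factorial : ℝ) :=
              mul_le_mul_of_nonneg_right hstep (by positivity)
          _ = u * B * P + (v : ℝ) * ((t : ℝ) + 1) * P := by
              rw [hfs1]
              have h3 : (t.factorial : ℝ) ≠ 0 := by positivity
              have h4 : ((t : ℝ) + 1) ≠ 0 := by positivity
              field_simp
          _ ≤ B * P * (B + ((t : ℝ) + 1)) :=
              step_alg u (v : ℝ) B ((t : ℝ) + 1) P hu0 huv hB2 hc hP0
      · -- binomial case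
        push_neg at hc
        have h2B : (v : ℝ) ≤ 2 * B := by rw [hB2]; linarith
        have hm2 : ((t : ℝ) + 2) ≤ (v : ℝ) := by exact_mod_cast hmv
        have hvm1 : (v : ℝ) - ((t : ℝ) + 2) + 1 ≤ B := by linarith
        have h6 : E (t + 2) * ((t + 2).factorial : ℝ)
            ≤ ((v.choose (t + 2) : ℝ)) * ((t + 2).factorial : ℝ) :=
          mul_le_mul_of_nonneg_right (hBin (t + 2)) (by positivity)
        refine le_trans h6 ?_
        have h7 : ((v.choose (t + 2) : ℝ)) * ((t + 2).factorial : ℝ)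
            = ∏ i ∈ range (t + 2), ((v : ℝ) - i) := by
          rw [← descProd (t + 2) v hmv, Nat.descFactorial_eq_factorial_mul_choose]
          push_cast; ring
        rw [h7, ← prod_range_reflect (fun i => (v : ℝ) - i) (t + 2)]
        refine prod_le_prod ?_ ?_
        · intro i hi
          have hi' : i < t + 2 := mem_range.mp hi
          have hle : ((t + 2 - 1 - i : ℕ) : ℝ) ≤ (v : ℝ) := by
            have : t + 2 - 1 - i ≤ v := by omega
            exact_mod_cast this
          linarith
        · intro i hi
          have hi' : i < t + 2 := mem_range.mp hi
          have hca : ((t + 2 - 1 - i : ℕ) : ℝ) = (t : ℝ) + 1 - i := by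
            have h9 : t + 2 - 1 - i = t + 1 - i := by omega
            rw [h9, Nat.cast_sub (by omega : i ≤ t + 1)]
            push_cast; ring
          simp only [hca]
          linarith

/-- Newton's identity, in norm-inequality form, for the elementary symmetric
functions of unit-modulus complex numbers. -/
private lemma newton_norm {σ : Type*} [Fintype σ] [DecidableEq σ] (z : σ → ℂ)
    (hz : ∀ i, ‖z i‖ = 1) (m : ℕ) (hm : 1 ≤ m) :
    (m : ℝ) * ‖∑ S ∈ powersetCard m (univ : Finset σ), ∏ i ∈ S, z i‖ ≤
      ‖∑ i, z i‖ * ‖∑ S ∈ powersetCard (m - 1) (univ : Finset σ), ∏ i ∈ S, z i‖ +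
        (Fintype.card σ : ℝ) *
          ∑ j ∈ range (m - 1), ‖∑ S ∈ powersetCard j (univ : Finset σ), ∏ i ∈ S, z i‖ := by
  obtain ⟨t, rfl⟩ : ∃ t, m = t + 1 := ⟨m - 1, by omega⟩
  simp only [Nat.add_sub_cancel]
  have hes : ∀ j : ℕ, (MvPolynomial.aeval z) (MvPolynomial.esymm σ ℂ j)
      = ∑ S ∈ powersetCard j (univ : Finset σ), ∏ i ∈ S, z i := by
    intro j
    rw [MvPolynomial.esymm, map_sum]
    exact sum_congr rfl fun S _ => by rw [map_prod]; simp
  have hps : ∀ d : ℕ, (MvPolynomial.aeval z) (MvPolynomial.psum σ ℂ d) = ∑ i, z i ^ d := by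
    intro d
    rw [MvPolynomial.psum, map_sum]
    simp
  have hnewton := congrArg (MvPolynomial.aeval z) (MvPolynomial.mul_esymm_eq_sum σ ℂ (t + 1))
  simp only [map_mul, map_sum, map_pow, map_neg, map_one, map_natCast, hes, hps] at hnewton
  -- take norms
  have hlhs : ((t + 1 : ℕ) : ℝ) * ‖∑ S ∈ powersetCard (t + 1) (univ : Finset σ), ∏ i ∈ S, z i‖
      = ‖((t + 1 : ℕ) : ℂ) * ∑ S ∈ powersetCard (t + 1) (univ : Finset σ), ∏ i ∈ S, z i‖ := by
    rw [norm_mul, Complex.norm_natCast]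
  rw [hlhs, hnewton, norm_mul, norm_pow, norm_neg, norm_one, one_pow, one_mul]
  refine le_trans (norm_sum_le _ _) ?_
  have hterm : ∀ a : ℕ × ℕ,
      ‖(-1 : ℂ) ^ a.1 * (∑ S ∈ powersetCard a.1 (univ : Finset σ), ∏ i ∈ S, z i)
        * ∑ i, z i ^ a.2‖
      = ‖∑ S ∈ powersetCard a.1 (univ : Finset σ), ∏ i ∈ S, z i‖ * ‖∑ i, z i ^ a.2‖ := by
    intro a
    rw [norm_mul, norm_mul, norm_pow, norm_neg, norm_one, one_pow, one_mul]
  have hpbound : ∀ d : ℕ, ‖∑ i, z i ^ d‖ ≤ (Fintype.card σ : ℝ) := by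
    intro d
    refine le_trans (norm_sum_le _ _) ?_
    have : ∀ i : σ, ‖z i ^ d‖ = 1 := fun i => by rw [norm_pow, hz, one_pow]
    simp [this]
  -- convert the filtered antidiagonal sum to a range sum
  have hre : ∑ a ∈ (antidiagonal (t + 1)).filter (fun a => a.1 < t + 1),
        ‖∑ S ∈ powersetCard a.1 (univ : Finset σ), ∏ i ∈ S, z i‖ * ‖∑ i, z i ^ a.2‖
      = ∑ j ∈ range (t + 1),
          ‖∑ S ∈ powersetCard j (univ : Finset σ), ∏ i ∈ S, z i‖ * ‖∑ i, z i ^ (t + 1 - j)‖ := by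
    rw [sum_filter, Finset.Nat.sum_antidiagonal_eq_sum_range_succ_mk, sum_range_succ]
    rw [if_neg (lt_irrefl _), add_zero]
    refine sum_congr rfl fun j hj => ?_
    rw [if_pos (mem_range.mp hj)]
  rw [sum_congr rfl fun a _ => hterm a, hre, sum_range_succ]
  have hone : t + 1 - t = 1 := by omega
  rw [hone]
  have hlast : ‖∑ S ∈ powersetCard t (univ : Finset σ), ∏ i ∈ S, z i‖ * ‖∑ i, z i ^ 1‖
      = ‖∑ i, z i‖ * ‖∑ S ∈ powersetCard t (univ : Finset σ), ∏ i ∈ S, z i‖ := by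
    simp [mul_comm]
  rw [hlast]
  rw [add_comm]
  refine add_le_add le_rfl ?_
  calc ∑ j ∈ range t,
        ‖∑ S ∈ powersetCard j (univ : Finset σ), ∏ i ∈ S, z i‖ * ‖∑ i, z i ^ (t + 1 - j)‖
      ≤ ∑ j ∈ range t,
        ‖∑ S ∈ powersetCard j (univ : Finset σ), ∏ i ∈ S, z i‖ * (Fintype.card σ : ℝ) := by
        refine sum_le_sum fun j hj => ?_
        exact mul_le_mul_of_nonneg_left (hpbound _) (norm_nonneg _)
    _ = (Fintype.card σ : ℝ) *
          ∑ j ∈ range t, ‖∑ S ∈ powersetCard j (univ : Finset σ), ∏ i ∈ S, z i‖ := by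
        rw [← sum_mul, mul_comm]

/-- Bound on the elementary symmetric function of unit-modulus complex numbers whose
power sums are controlled. -/
private lemma esym_bound {σ : Type*} [Fintype σ] [DecidableEq σ] (z : σ → ℂ)
    (hz : ∀ i, ‖z i‖ = 1) (u : ℝ) (hu0 : 0 ≤ u)
    (hu : ‖∑ i, z i‖ ≤ u) (huv : u ≤ (Fintype.card σ : ℝ)) (m : ℕ)
    (hm : m ≤ Fintype.card σ) :
    ‖∑ S ∈ powersetCard m (univ : Finset σ), ∏ i ∈ S, z i‖ * (m.factorial : ℝ) ≤
      ∏ i ∈ range m, ((u + Fintype.card σ) / 2 + i) := by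
  refine aux_key u (Fintype.card σ) hu0 huv
    (fun j => ‖∑ S ∈ powersetCard j (univ : Finset σ), ∏ i ∈ S, z i‖) ?_ ?_ ?_ ?_ m hm
  · simp
  · exact fun j => norm_nonneg _
  · intro m' hm'
    refine le_trans (newton_norm z hz m' hm') ?_
    exact add_le_add (mul_le_mul_of_nonneg_right hu (norm_nonneg _)) (le_refl _)
  · intro j
    refine le_trans (norm_sum_le _ _) ?_
    have h1 : ∀ S ∈ powersetCard j (univ : Finset σ), ‖∏ i ∈ S, z i‖ = 1 := by
      intro S _
      rw [norm_prod]
      exact prod_eq_one fun i _ => hz i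
    rw [sum_congr rfl h1, sum_const, card_powersetCard, card_univ]
    simp

set_option maxHeartbeats 2000000 in
/-- Main theorem (counting form): let `V = {D_n(x, a) : x ∈ F_q}` be the value set of
the Dickson polynomial (`a ≠ 0`, `n ≥ 2`).  If every nontrivial additive character
`ψ` of `F_q` satisfies `|∑_{y ∈ V} ψ(y)| ≤ (n+1)√q`, `|V| ≥ k + 1`, and
`(1/q)·|V|(|V|-1)⋯(|V|-k) > ((n+1)√q/2 + k + |V|/2)_{k+1}`, then for every `b ∈ F_q`
there are pairwise distinct `y_1, …, y_{k+1} ∈ V` with `y_1 + ⋯ + y_{k+1} = b`. -/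
theorem dickson_value_set_subset_sum {F : Type*} [Field F] [Fintype F] [DecidableEq F]
    (a : F) (ha : a ≠ 0) (n : ℕ) (hn : 2 ≤ n) (k : ℕ) (hk : 1 ≤ k)
    (V : Finset F)
    (hV : V = Finset.univ.image (fun x => (Polynomial.dickson 1 a n).eval x))
    (hVcard : k + 1 ≤ V.card)
    (hchar : ∀ ψ : AddChar F ℂ, ψ ≠ 1 →
      ‖∑ y ∈ V, ψ y‖ ≤ (n + 1 : ℝ) * Real.sqrt (Fintype.card F))
    (hineq : (1 / (Fintype.card F : ℝ)) * ∏ j ∈ Finset.range (k + 1), ((V.card : ℝ) - j) >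
      ∏ j ∈ Finset.range (k + 1),
        ((n + 1 : ℝ) * Real.sqrt (Fintype.card F) / 2 + k + (V.card : ℝ) / 2 - j)) :
    ∀ b : F, ∃ y : Fin (k + 1) → F, Function.Injective y ∧ (∀ i, y i ∈ V) ∧
      ∑ i, y i = b := by
  classical
  intro b
  have hq1 : 1 ≤ Fintype.card F := Fintype.card_pos
  set q : ℕ := Fintype.card F with hqdef
  set v : ℕ := V.card with hvdef
  set m : ℕ := k + 1 with hmdef
  set M : ℝ := ((n : ℝ) + 1) * Real.sqrt q with hMdef
  have hM0 : 0 ≤ M := by positivity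
  have hvm : m ≤ v := hVcard
  have hcardV : Fintype.card ↥V = v := Fintype.card_coe V
  set ψ : AddChar F ℂ := AddChar.FiniteField.primitiveChar_to_Complex F with hψdef
  have hψprim : ψ.IsPrimitive := AddChar.FiniteField.primitiveChar_to_Complex_isPrimitive F
  have hRpos : 0 < ringChar F :=
    Nat.pos_of_ne_zero (CharP.ringChar_ne_zero_of_finite F)
  have hψ1 : ∀ x : F, ‖ψ x‖ = 1 := fun x =>
    Complex.norm_eq_one_of_mem_rootsOfUnity (ψ.val_mem_rootsOfUnity x hRpos)
  set P : Finset (Finset ↥V) := powersetCard m (univ : Finset ↥V) with hPdef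
  set T : Finset (Finset ↥V) := P.filter (fun S => (∑ i ∈ S, (i : F)) = b) with hTdef
  set W : ℝ := ∏ i ∈ range m, (M / 2 + (v : ℝ) / 2 + i) with hWdef
  have hW0 : 0 ≤ W := prod_nonneg fun i _ => by positivity
  have hmfac : (0 : ℝ) < (m.factorial : ℝ) := by positivity
  -- e_m bound for x ≠ 0
  have hebound : ∀ x : F, x ≠ 0 →
      ‖∑ S ∈ P, ∏ i ∈ S, ψ (x * (i : F))‖ * (m.factorial : ℝ) ≤ W := by
    intro x hx
    set z : ↥V → ℂ := fun i => ψ (x * (i : F)) with hzdef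
    have hz1 : ∀ i : ↥V, ‖z i‖ = 1 := fun i => hψ1 _
    set u : ℝ := min M (v : ℝ) with hudef
    have hu0 : 0 ≤ u := le_min hM0 (by positivity)
    have huM : u ≤ M := min_le_left _ _
    have hsum1 : ‖∑ i : ↥V, z i‖ ≤ u := by
      refine le_min ?_ ?_
      · have h2 := hchar (AddChar.mulShift ψ x) (hψprim hx)
        have h3 : ∑ i : ↥V, z i = ∑ y ∈ V, (AddChar.mulShift ψ x) y := by
          rw [Finset.sum_coe_sort V (fun y => ψ (x * y))]
          exact sum_congr rfl fun y _ => by rw [AddChar.mulShift_apply]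
        rw [h3]
        exact h2
      · refine le_trans (norm_sum_le _ _) ?_
        have : ∀ i : ↥V, ‖z i‖ = 1 := hz1
        simp [this, hcardV, hvdef]
    have huv : u ≤ (Fintype.card ↥V : ℝ) := by
      rw [hcardV]; exact min_le_right _ _
    have hmv' : m ≤ Fintype.card ↥V := by rw [hcardV]; exact hvm
    have h4 := esym_bound z hz1 u hu0 hsum1 huv m hmv'
    refine le_trans h4 ?_
    refine prod_le_prod ?_ ?_
    · intro i _
      have : (0:ℝ) ≤ (Fintype.card ↥V : ℝ) := by positivity
      have : (0:ℝ) ≤ (i : ℝ) := by positivity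
      have h5 : (0:ℝ) ≤ (u + (Fintype.card ↥V : ℝ)) / 2 := by positivity
      linarith
    · intro i _
      rw [hcardV]
      have : u ≤ M := huM
      linarith [min_le_right M ((v:ℕ):ℝ)]
  -- orthogonality identity
  have horth : ((q : ℂ)) * T.card = (v.choose m : ℂ)
      + ∑ x ∈ (univ : Finset F).erase 0,
          (ψ (-(x * b)) * ∑ S ∈ P, ∏ i ∈ S, ψ (x * (i : F))) := by
    have hmain : ∀ S ∈ P, ∑ x : F, ψ (x * ((∑ i ∈ S, (i : F)) - b))
        = if (∑ i ∈ S, (i : F)) = b then (q : ℂ) else 0 := by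
      intro S _
      rw [AddChar.sum_mulShift _ hψprim]
      simp [sub_eq_zero, hqdef]
    have h3 : ∑ S ∈ P, ∑ x : F, ψ (x * ((∑ i ∈ S, (i : F)) - b)) = (q : ℂ) * T.card := by
      rw [sum_congr rfl hmain, ← sum_filter, sum_const, ← hTdef]
      simp [mul_comm]
    have hmapsum : ∀ (x : F) (S : Finset ↥V),
        ψ (x * (∑ i ∈ S, (i : F))) = ∏ i ∈ S, ψ (x * (i : F)) := by
      intro x S
      rw [mul_sum]
      induction S using Finset.cons_induction with
      | empty => simp
      | cons i S hi IH =>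
        rw [sum_cons, prod_cons, AddChar.map_add_eq_mul, IH]
    have h4 : ∑ S ∈ P, ∑ x : F, ψ (x * ((∑ i ∈ S, (i : F)) - b))
        = ∑ x : F, ψ (-(x * b)) * ∑ S ∈ P, ∏ i ∈ S, ψ (x * (i : F)) := by
      rw [sum_comm]
      refine sum_congr rfl fun x _ => ?_
      rw [mul_sum]
      refine sum_congr rfl fun S hS => ?_
      have : x * ((∑ i ∈ S, (i : F)) - b) = (-(x * b)) + x * (∑ i ∈ S, (i : F)) := by ring
      rw [this, AddChar.map_add_eq_mul, hmapsum]
    have h5 : ∑ x : F, ψ (-(x * b)) * ∑ S ∈ P, ∏ i ∈ S, ψ (x * (i : F))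
        = (v.choose m : ℂ) + ∑ x ∈ (univ : Finset F).erase 0,
            (ψ (-(x * b)) * ∑ S ∈ P, ∏ i ∈ S, ψ (x * (i : F))) := by
      rw [← Finset.add_sum_erase _ _ (mem_univ (0 : F))]
      congr 1
      have hψ0 : ψ (-((0 : F) * b)) = 1 := by
        simp [AddChar.map_zero_eq_one]
      rw [hψ0, one_mul]
      have h6 : ∀ S ∈ P, ∏ i ∈ S, ψ ((0 : F) * (i : F)) = 1 := by
        intro S _
        refine prod_eq_one fun i _ => ?_
        simp [AddChar.map_zero_eq_one]
      rw [sum_congr rfl h6, sum_const, hPdef, card_powersetCard, card_univ, hcardV]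
      simp
    rw [← h3, h4, h5]
  -- T is nonempty
  have hTpos : 0 < T.card := by
    rcases Nat.eq_zero_or_pos T.card with h0 | h
    · exfalso
      rw [h0] at horth
      simp only [Nat.cast_zero, mul_zero] at horth
      have h6 : (v.choose m : ℝ) ≤ ∑ x ∈ (univ : Finset F).erase 0,
          ‖ψ (-(x * b)) * ∑ S ∈ P, ∏ i ∈ S, ψ (x * (i : F))‖ := by
        have h7 : (v.choose m : ℂ) = -∑ x ∈ (univ : Finset F).erase 0,
            (ψ (-(x * b)) * ∑ S ∈ P, ∏ i ∈ S, ψ (x * (i : F))) := by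
          linear_combination -horth
        calc (v.choose m : ℝ) = ‖(v.choose m : ℂ)‖ := by
              rw [Complex.norm_natCast]
          _ = ‖-∑ x ∈ (univ : Finset F).erase 0,
              (ψ (-(x * b)) * ∑ S ∈ P, ∏ i ∈ S, ψ (x * (i : F)))‖ := by rw [← h7]
          _ = ‖∑ x ∈ (univ : Finset F).erase 0,
              (ψ (-(x * b)) * ∑ S ∈ P, ∏ i ∈ S, ψ (x * (i : F)))‖ := norm_neg _
          _ ≤ _ := norm_sum_le _ _
      have h8 : ∑ x ∈ (univ : Finset F).erase 0,
          ‖ψ (-(x * b)) * ∑ S ∈ P, ∏ i ∈ S, ψ (x * (i : F))‖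
          ≤ ((q - 1 : ℕ) : ℝ) * (W / (m.factorial : ℝ)) := by
        have h9 : ∀ x ∈ (univ : Finset F).erase 0,
            ‖ψ (-(x * b)) * ∑ S ∈ P, ∏ i ∈ S, ψ (x * (i : F))‖
            ≤ W / (m.factorial : ℝ) := by
          intro x hx
          have hx0 : x ≠ 0 := (mem_erase.mp hx).1
          rw [norm_mul, hψ1, one_mul, le_div_iff₀ hmfac]
          exact hebound x hx0
        refine le_trans (sum_le_sum h9) ?_
        rw [sum_const, card_erase_of_mem (mem_univ _), card_univ, ← hqdef]
        simp [nsmul_eq_mul]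
      -- hineq gives m! * choose > q * W
      have h10 : W = ∏ j ∈ range m, (M / 2 + (k : ℝ) + (v : ℝ) / 2 - j) := by
        rw [hWdef, ← prod_range_reflect]
        refine prod_congr rfl fun j hj => ?_
        have hj' : j < m := mem_range.mp hj
        have hca : ((m - 1 - j : ℕ) : ℝ) = (k : ℝ) - j := by
          have h11 : m - 1 - j = k - j := by omega
          rw [h11, Nat.cast_sub (by omega : j ≤ k)]
        rw [hca]
        ring
      have h12 : (∏ j ∈ range m, ((v : ℝ) - j))
          = (m.factorial : ℝ) * (v.choose m : ℝ) := by
        rw [← descProd m v hvm, Nat.descFactorial_eq_factorial_mul_choose]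
        push_cast; ring
      have h13 : (q : ℝ) * W < ∏ j ∈ range m, ((v : ℝ) - j) := by
        have hqpos : (0 : ℝ) < (q : ℝ) := by exact_mod_cast hq1
        have h' := hineq
        rw [← h10] at h'
        calc (q : ℝ) * W < (q : ℝ) * ((1 / (q : ℝ)) * ∏ j ∈ range m, ((v : ℝ) - j)) :=
              mul_lt_mul_of_pos_left h' hqpos
          _ = ∏ j ∈ range m, ((v : ℝ) - j) := by field_simp
      have h14 : ((q - 1 : ℕ) : ℝ) = (q : ℝ) - 1 := by
        rw [Nat.cast_sub hq1]; simp
      have h15 : (m.factorial : ℝ) * (v.choose m : ℝ) ≤ ((q : ℝ) - 1) * W := by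
        calc (m.factorial : ℝ) * (v.choose m : ℝ)
            ≤ (m.factorial : ℝ) * (((q - 1 : ℕ) : ℝ) * (W / (m.factorial : ℝ))) := by
              apply mul_le_mul_of_nonneg_left (le_trans h6 h8) (le_of_lt hmfac)
          _ = ((q : ℝ) - 1) * W := by
              rw [h14]; field_simp
      nlinarith [h13, h15, hW0, h12]
    · exact h
  obtain ⟨S, hS⟩ := Finset.card_pos.mp hTpos
  have hSP : S ∈ P := (mem_filter.mp hS).1
  have hSsum : ∑ i ∈ S, (i : F) = b := (mem_filter.mp hS).2
  have hScard : S.card = m := by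
    have := (Finset.mem_powersetCard.mp hSP).2
    exact this
  set e : Fin m ≃ ↥S := (finCongr hScard.symm).trans S.equivFin.symm with hedef
  refine ⟨fun i => ((e i : ↥V) : F), ?_, ?_, ?_⟩
  · intro i j hij
    have h1 : ((e i : ↥V)) = ((e j : ↥V)) := Subtype.val_injective hij
    have h2 : e i = e j := Subtype.val_injective h1
    exact e.injective h2
  · intro i
    exact (e i : ↥V).2
  · have h1 : ∑ i : Fin m, ((e i : ↥V) : F) = ∑ s : ↥S, ((s : ↥V) : F) :=
      Fintype.sum_equiv e _ _ (fun i => rfl)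
    have h2 : ∑ s : ↥S, ((s : ↥V) : F) = ∑ s ∈ S, (s : F) :=
      Finset.sum_coe_sort S (fun s => (s : F))
    rw [h1, h2, hSsum]
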